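/- Let L ⊆ ℂⁿ×ℂⁿ be a positive Lagrangian subspace. Then the projection π : L → ℂⁿ, π(p,q) = q, is a linear isomorphism, and there exists a unique complex symmetric n×n matrix B with positive definite imaginary part such that L = L_B = {(Bq,q) : q ∈ ℂⁿ}. -/

import Mathlib

open Matrix

noncomputable section

/-- The standard symplectic matrix `Ω = [[0, −I],[I, 0]]` on `ℝ²ⁿ`. -/
def Omg (n : ℕ) : Matrix (Fin n ⊕ Fin n) (Fin n ⊕ Fin n) ℝ :=
  fromBlocks 0 (-1) 1 0

/-- The complexification of `Ω`. -/
def OmgC (n : ℕ) : Matrix (Fin n ⊕ Fin n) (Fin n ⊕ Fin n) ℂ :=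
  (Omg n).map Complex.ofReal

/-- Componentwise imaginary part of a complex matrix. -/
def matIm {m k : Type*} (A : Matrix m k ℂ) : Matrix m k ℝ := A.map Complex.im

/-- The hermitian form `h(z,z) = (i/2) z·Ω z̄` measuring positivity of Lagrangian
subspaces (the bar is componentwise complex conjugation). -/
def posform {n : ℕ} (z : Fin n ⊕ Fin n → ℂ) : ℂ :=
  (Complex.I / 2) * (z ⬝ᵥ OmgC n *ᵥ star z)

/-- The subset `L_B = {(Bq, q) : q ∈ ℂⁿ}` of `ℂⁿ×ℂⁿ`. -/
def LBset {n : ℕ} (B : Matrix (Fin n) (Fin n) ℂ) : Set (Fin n ⊕ Fin n → ℂ) :=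
  {z | ∃ q : Fin n → ℂ, z = Sum.elim (B *ᵥ q) q}

lemma omg_dot {n : ℕ} (z w : Fin n ⊕ Fin n → ℂ) :
    z ⬝ᵥ OmgC n *ᵥ w =
      (∑ i, z (Sum.inr i) * w (Sum.inl i)) - ∑ i, z (Sum.inl i) * w (Sum.inr i) := by
  simp [OmgC, Omg, dotProduct, mulVec, Fintype.sum_sum_type, fromBlocks, Matrix.map_apply,
    Finset.sum_sub_distrib, mul_comm, Matrix.one_apply, ite_mul, Finset.sum_ite_eq,
    apply_ite Complex.ofReal]
  ring

/-- Let `L ⊆ ℂⁿ×ℂⁿ` be a positive Lagrangian subspace (an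
`n`-dimensional subspace on which `Ω` vanishes and `(i/2) z·Ω z̄ > 0` for nonzero `z`).
Then the projection `π : L → ℂⁿ`, `π(p,q) = q`, is a linear bijection, and there is a
unique complex symmetric matrix `B` with positive definite imaginary part such that
`L = L_B = {(Bq,q) : q ∈ ℂⁿ}`. -/
theorem statement4 (n : ℕ) (L : Submodule ℂ (Fin n ⊕ Fin n → ℂ))
    (hdim : Module.finrank ℂ L = n)
    (hLag : ∀ z ∈ L, ∀ z' ∈ L, z ⬝ᵥ OmgC n *ᵥ z' = 0)
    (hpos : ∀ z ∈ L, z ≠ 0 → (posform z).im = 0 ∧ 0 < (posform z).re) :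
    Function.Bijective (fun z : L => fun i : Fin n => (z : Fin n ⊕ Fin n → ℂ) (Sum.inr i)) ∧
    ∃! B : Matrix (Fin n) (Fin n) ℂ,
      Bᵀ = B ∧ (matIm B).PosDef ∧ (L : Set (Fin n ⊕ Fin n → ℂ)) = LBset B := by
  classical
  -- the projection to the second component, as a linear map on L
  set π : L →ₗ[ℂ] (Fin n → ℂ) := (LinearMap.funLeft ℂ ℂ Sum.inr).comp L.subtype with hπ
  have hπapp : ∀ z : L, π z = fun i => (z : Fin n ⊕ Fin n → ℂ) (Sum.inr i) := fun z => rfl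
  -- injectivity
  have hinj : Function.Injective π := by
    rw [← LinearMap.ker_eq_bot, LinearMap.ker_eq_bot']
    intro z hz
    by_contra hz0
    have hzr : ∀ i, (z : Fin n ⊕ Fin n → ℂ) (Sum.inr i) = 0 := fun i => congrFun hz i
    have h := hpos (z : Fin n ⊕ Fin n → ℂ) z.2 (fun h0 => hz0 (Subtype.ext h0))
    have : posform (z : Fin n ⊕ Fin n → ℂ) = 0 := by
      simp [posform, omg_dot, hzr]
    rw [this] at h
    simpa using h.2
  have hrank : Module.finrank ℂ L = Module.finrank ℂ (Fin n → ℂ) := by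
    simp [hdim]
  let e : L ≃ₗ[ℂ] (Fin n → ℂ) := π.linearEquivOfInjective hinj hrank
  have heapp : ∀ z : L, e z = π z := fun z => π.linearEquivOfInjective_apply hinj hrank z
  have hbij : Function.Bijective
      (fun z : L => fun i : Fin n => (z : Fin n ⊕ Fin n → ℂ) (Sum.inr i)) := by
    have : (fun z : L => fun i : Fin n => (z : Fin n ⊕ Fin n → ℂ) (Sum.inr i)) = fun z => e z := by
      funext z; rw [heapp]; rfl
    rw [this]
    exact e.bijective
  refine ⟨hbij, ?_⟩
  -- the matrix B
  set T : (Fin n → ℂ) →ₗ[ℂ] (Fin n → ℂ) :=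
    (LinearMap.funLeft ℂ ℂ Sum.inl).comp (L.subtype.comp e.symm.toLinearMap) with hT
  set B : Matrix (Fin n) (Fin n) ℂ := LinearMap.toMatrix' T with hBdef
  have hBmul : ∀ q : Fin n → ℂ, B *ᵥ q = fun i => ((e.symm q : L) : Fin n ⊕ Fin n → ℂ) (Sum.inl i) := by
    intro q
    have : B *ᵥ q = Matrix.toLin' B q := (Matrix.toLin'_apply B q).symm
    rw [this, hBdef, Matrix.toLin'_toMatrix']
    rfl
  -- membership characterization
  have hsymm_snd : ∀ q : Fin n → ℂ, ∀ i, ((e.symm q : L) : Fin n ⊕ Fin n → ℂ) (Sum.inr i) = q i := by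
    intro q i
    have := heapp (e.symm q)
    rw [e.apply_symm_apply] at this
    exact (congrFun this.symm i)
  have hmem : (L : Set (Fin n ⊕ Fin n → ℂ)) = LBset B := by
    ext z
    constructor
    · intro hz
      refine ⟨π ⟨z, hz⟩, ?_⟩
      have hsymm : e.symm (e ⟨z, hz⟩) = ⟨z, hz⟩ := e.symm_apply_apply _
      funext j
      rcases j with i | i
      · rw [Sum.elim_inl, hBmul, ← heapp, hsymm]
      · rw [Sum.elim_inr]; rfl
    · rintro ⟨q, rfl⟩
      have : Sum.elim (B *ᵥ q) q = ((e.symm q : L) : Fin n ⊕ Fin n → ℂ) := by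
        funext j
        rcases j with i | i
        · rw [Sum.elim_inl, hBmul]
        · rw [Sum.elim_inr, hsymm_snd]
      rw [this]
      exact (e.symm q).2
  -- basis vectors of L
  have hmemB : ∀ q : Fin n → ℂ, Sum.elim (B *ᵥ q) q ∈ L := by
    intro q
    have : Sum.elim (B *ᵥ q) q ∈ LBset B := ⟨q, rfl⟩
    rwa [← hmem] at this
  -- symmetry
  have hsym : Bᵀ = B := by
    ext i j
    have h := hLag _ (hmemB (Pi.single j 1)) _ (hmemB (Pi.single i 1))
    rw [omg_dot] at h
    simp only [Sum.elim_inl, Sum.elim_inr, mulVec_single, Pi.single_apply, mul_one] at h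
    simp only [Finset.sum_ite_eq', Finset.mem_univ, if_true, mul_ite, mul_zero, mul_one,
      ite_mul, zero_mul] at h
    simp only [MulOpposite.op_one, one_smul, Matrix.col_apply, one_mul] at h
    rw [Matrix.transpose_apply]
    linear_combination h
  -- computation of posform on real points
  have hposf : ∀ x : Fin n → ℝ,
      posform (Sum.elim (B *ᵥ fun i => (x i : ℂ)) (fun i => (x i : ℂ)))
        = ((x ⬝ᵥ matIm B *ᵥ x : ℝ) : ℂ) := by
    intro x
    set p : Fin n → ℂ := B *ᵥ fun i => (x i : ℂ) with hp
    have him : ∀ i, (p i).im = ∑ j, (B i j).im * x j := by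
      intro i
      rw [hp]
      simp [mulVec, dotProduct, Complex.im_sum, Complex.mul_im]
    have step1 : posform (Sum.elim p (fun i => (x i : ℂ)))
        = ∑ i, (x i : ℂ) * ((p i).im : ℂ) := by
      rw [posform, omg_dot]
      simp only [Sum.elim_inl, Sum.elim_inr, Pi.star_apply, RCLike.star_def,
        Complex.conj_ofReal]
      rw [← Finset.sum_sub_distrib, Finset.mul_sum]
      refine Finset.sum_congr rfl fun i _ => ?_
      have h := Complex.sub_conj (p i)
      push_cast at h
      have hI := Complex.I_sq
      linear_combination (-(Complex.I * (x i : ℂ))/2) * h -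
        ((x i : ℂ) * ((p i).im : ℂ)) * hI
    rw [step1]
    push_cast [matIm, dotProduct, mulVec, Matrix.map_apply, him, Finset.mul_sum]
    rfl
  have hBsymm : ∀ i j, B j i = B i j := fun i j => by
    simpa using congrFun (congrFun hsym i) j
  have hpd : (matIm B).PosDef := by
    rw [Matrix.posDef_iff_dotProduct_mulVec]
    constructor
    · ext i j
      simp [matIm, Matrix.conjTranspose_apply, Matrix.map_apply, hBsymm i j]
    · intro x hx
      set z : Fin n ⊕ Fin n → ℂ :=
        Sum.elim (B *ᵥ fun i => ((x i : ℝ) : ℂ)) (fun i => ((x i : ℝ) : ℂ)) with hzdef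
      have hz : z ∈ L := hmemB _
      have hz0 : z ≠ 0 := by
        intro h0
        apply hx
        funext i
        have := congrFun (hzdef ▸ h0) (Sum.inr i)
        simpa using this
      have h := (hpos z hz hz0).2
      rw [hzdef, hposf x] at h
      simpa using h
  refine ⟨B, ⟨hsym, hpd, hmem⟩, ?_⟩
  rintro B' ⟨-, -, hset'⟩
  ext i j
  have h1 : Sum.elim (B' *ᵥ Pi.single j 1) (Pi.single j 1) ∈ (L : Set (Fin n ⊕ Fin n → ℂ)) := by
    rw [hset']; exact ⟨_, rfl⟩
  rw [hmem] at h1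
  obtain ⟨q, hq⟩ := h1
  have hqq : q = Pi.single j 1 := by
    funext k; exact (congrFun hq (Sum.inr k)).symm
  have h2 := congrFun hq (Sum.inl i)
  rw [hqq] at h2
  simpa using h2
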